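/- arXiv:0908.2078 — 2 statements merged into one kernel-verified Lean document; each statement's English description precedes it below -/
import Mathlib

section
/- For every complex square matrix A of dimension n, there exists a QR decomposition A = QR with Q unitary and R upper triangular such that: (i) for every j, all entries R_{ij} with i > ρ_j vanish, where ρ_j is the rank of the first j columns of A; and (ii) the first nonzero element of each row of R is real and positive. -/
open Matrix

/-- The rank of the matrix formed by the first `j` columns of `A`. -/
noncomputable def colRank (n : ℕ) (A : Matrix (Fin n) (Fin n) ℂ) (j : ℕ) : ℕ :=
  Module.finrank ℂ (Submodule.span ℂ ((fun l => Aᵀ l) '' {l : Fin n | (l : ℕ) < j}))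

instance canonicalQR_auxWF (n : ℕ) : WellFoundedLT (Fin n) := inferInstance

open InnerProductSpace in
/-- every complex square matrix admits a QR decomposition whose
triangular factor satisfies the canonical conditions: entries below row `ρ_j`
in column `j` vanish, and the first nonzero entry of each row is real positive. -/
theorem canonical_QR_exists (n : ℕ) (A : Matrix (Fin n) (Fin n) ℂ) :
    ∃ Q R : Matrix (Fin n) (Fin n) ℂ,
      Qᴴ * Q = 1 ∧
      (∀ i j : Fin n, j < i → R i j = 0) ∧
      A = Q * R ∧
      (∀ i j : Fin n, colRank n A ((j : ℕ) + 1) ≤ (i : ℕ) → R i j = 0) ∧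
      (∀ i j : Fin n, (∀ j' : Fin n, j' < j → R i j' = 0) → R i j ≠ 0 →
        (R i j).im = 0 ∧ 0 < (R i j).re) := by
  classical
  set v : Fin n → EuclideanSpace ℂ (Fin n) := fun j => WithLp.toLp 2 (fun l => A l j) with hv
  set g : Fin n → EuclideanSpace ℂ (Fin n) := gramSchmidt ℂ v with hg
  set gN : Fin n → EuclideanSpace ℂ (Fin n) := gramSchmidtNormed ℂ v with hgN
  set T : Finset (Fin n) := Finset.univ.filter (fun i => gN i ≠ 0) with hT
  set r : ℕ := T.card with hr
  have hrn : r ≤ n := by simpa using T.card_le_univ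
  set mono : Fin r ↪o Fin n := T.orderEmbOfFin rfl with hmono
  have hmonoT : ∀ k : Fin r, gN (mono k) ≠ 0 := by
    intro k
    have h1 : mono k ∈ T := Finset.orderEmbOfFin_mem T rfl k
    simp only [hT, Finset.mem_filter, Finset.mem_univ, true_and] at h1
    exact h1
  -- the orthonormal basis
  have horth : Orthonormal ℂ (Set.restrict {k : Fin n | (k:ℕ) < r}
      (fun k => if h : (k:ℕ) < r then gN (mono ⟨k, h⟩) else 0)) := by
    have h0 := gramSchmidtNormed_orthonormal' (𝕜 := ℂ) v
    have hcomp := h0.comp (fun k : {k : Fin n | (k:ℕ) < r} =>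
      (⟨mono ⟨k.1, k.2⟩, hmonoT _⟩ : {i : Fin n | gramSchmidtNormed ℂ v i ≠ 0}))
      (fun a c hac => by
        have h1 : mono ⟨(a : Fin n), a.2⟩ = mono ⟨(c : Fin n), c.2⟩ := by
          simpa using congrArg Subtype.val hac
        have h2 := mono.injective h1
        have h3 : ((a : Fin n) : ℕ) = ((c : Fin n) : ℕ) := by
          simpa using congrArg Fin.val h2
        exact Subtype.ext (Fin.ext h3))
    have heq : Set.restrict {k : Fin n | (k:ℕ) < r}
        (fun k => if h : (k:ℕ) < r then gN (mono ⟨k, h⟩) else 0)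
        = fun k : {k : Fin n | (k:ℕ) < r} => gN (mono ⟨(k : Fin n), k.2⟩) := by
      funext k
      have hk : (((k : Fin n)) : ℕ) < r := k.2
      show (if h : ((k : Fin n) : ℕ) < r then gN (mono ⟨k, h⟩) else 0) = _
      rw [dif_pos hk]
    rw [heq]
    exact hcomp
  obtain ⟨b, hb⟩ := horth.exists_orthonormalBasis_extension_of_card_eq (by simp)
  have hbk : ∀ (k : Fin n) (h : (k:ℕ) < r), b k = gN (mono ⟨k, h⟩) := by
    intro k h
    have h1 := hb k h
    rwa [dif_pos h] at h1
  -- rows at index ≥ r are orthogonal to everything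
  have hvj_mem : ∀ j, v j ∈ Submodule.span ℂ (Set.range gN) := by
    intro j
    rw [hgN, span_gramSchmidtNormed_range, span_gramSchmidt]
    exact Submodule.subset_span ⟨j, rfl⟩
  have zero1 : ∀ (k : Fin n), r ≤ (k:ℕ) → ∀ (j : Fin n), (inner ℂ (b k) (v j) : ℂ) = 0 := by
    intro k hk j
    have hgen : ∀ x ∈ Set.range gN, (inner ℂ (b k) x : ℂ) = 0 := by
      rintro x ⟨i, rfl⟩
      by_cases h0 : gN i = 0
      · rw [h0, inner_zero_right]
      · have hiT : i ∈ T := by rw [hT]; simp [h0]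
        have hiR : i ∈ Set.range mono := by
          rw [hmono, Finset.range_orderEmbOfFin]; exact hiT
        obtain ⟨k', hk'⟩ := hiR
        have hk'r : ((k' : ℕ) : ℕ) < r := k'.2
        set k'' : Fin n := ⟨(k' : ℕ), lt_of_lt_of_le k'.2 hrn⟩ with hk''
        have hbk'' : b k'' = gN i := by
          rw [hbk k'' hk'r]
          rw [← hk']
        rw [← hbk'']
        have hne : k ≠ k'' := by
          intro hEq
          rw [hEq] at hk
          simp only [hk''] at hk
          omega
        exact b.orthonormal.2 hne
    refine Submodule.span_induction (p := fun x _ => (inner ℂ (b k) x : ℂ) = 0)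
      hgen (inner_zero_right _) (fun x y _ _ ihx ihy => by
        show (inner ℂ (b k) (x + y) : ℂ) = 0
        rw [inner_add_right]
        show (inner ℂ (b k) x : ℂ) + (inner ℂ (b k) y : ℂ) = 0
        rw [show (inner ℂ (b k) x : ℂ) = 0 from ihx, show (inner ℂ (b k) y : ℂ) = 0 from ihy, add_zero])
      (fun a x _ ih => by
        show (inner ℂ (b k) (a • x) : ℂ) = 0
        rw [inner_smul_right]
        rw [show (inner ℂ (b k) x : ℂ) = 0 from ih, mul_zero]) (hvj_mem j)
  -- rows k < r are orthogonal to earlier columns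
  have zero2 : ∀ (k : Fin n) (h : (k:ℕ) < r) (j : Fin n), j < mono ⟨k, h⟩ →
      (inner ℂ (b k) (v j) : ℂ) = 0 := by
    intro k h j hj
    rw [hbk k h]
    show (inner ℂ ((‖gramSchmidt ℂ v (mono ⟨k, h⟩)‖ : ℂ)⁻¹ • gramSchmidt ℂ v (mono ⟨k, h⟩)) (v j) : ℂ) = 0
    rw [inner_smul_left, gramSchmidt_inv_triangular ℂ v hj, mul_zero]
  -- diagonal value
  have inner_g_self : ∀ m : Fin n, (inner ℂ (g m) (v m) : ℂ) = (‖g m‖ : ℂ) ^ 2 := by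
    intro m
    conv_lhs => rw [hg]; rw [gramSchmidt_def' ℂ v m]
    rw [inner_add_right, inner_self_eq_norm_sq_to_K]
    simp only [Submodule.starProjection_singleton, inner_sum, inner_smul_right]
    rw [Finset.sum_eq_zero, add_zero]
    · rfl
    · intro i hi
      have hne : m ≠ i := (Finset.mem_Iio.1 hi).ne'
      rw [← hg, gramSchmidt_orthogonal ℂ v hne, mul_zero]
  have gm_ne : ∀ (k : Fin n) (h : (k:ℕ) < r), g (mono ⟨k, h⟩) ≠ 0 := by
    intro k h h0
    apply hmonoT ⟨k, h⟩
    rw [hgN]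
    show (‖gramSchmidt ℂ v (mono ⟨k, h⟩)‖ : ℂ)⁻¹ • gramSchmidt ℂ v (mono ⟨k, h⟩) = 0
    rw [← hg, h0, smul_zero]
  have diag : ∀ (k : Fin n) (h : (k:ℕ) < r),
      (inner ℂ (b k) (v (mono ⟨k, h⟩)) : ℂ) = ((‖g (mono ⟨k, h⟩)‖ : ℝ) : ℂ) := by
    intro k h
    have hne : ((‖g (mono ⟨k, h⟩)‖ : ℝ) : ℂ) ≠ 0 := by
      simpa using gm_ne k h
    rw [hbk k h]
    show (inner ℂ ((‖gramSchmidt ℂ v (mono ⟨k, h⟩)‖ : ℂ)⁻¹ • gramSchmidt ℂ v (mono ⟨k, h⟩))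
      (v (mono ⟨k, h⟩)) : ℂ) = _
    rw [inner_smul_left, ← hg, inner_g_self]
    rw [map_inv₀, Complex.conj_ofReal, sq, inv_mul_cancel_left₀ hne]
  -- counting function
  set c : Fin n → ℕ := fun j => (T.filter (fun i => i ≤ j)).card with hc
  have claim : ∀ (j : Fin n) (k : Fin n) (h : (k:ℕ) < r), c j ≤ (k:ℕ) → j < mono ⟨k, h⟩ := by
    intro j k h hcj
    by_contra hle
    push_neg at hle
    have hsub : (Finset.Iic (⟨k, h⟩ : Fin r)).image (fun k' => mono k')
        ⊆ T.filter (fun i => i ≤ j) := by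
      intro i hi
      simp only [Finset.mem_image, Finset.mem_Iic] at hi
      obtain ⟨k', hk', rfl⟩ := hi
      rw [Finset.mem_filter]
      exact ⟨Finset.orderEmbOfFin_mem T rfl k', le_trans (mono.monotone hk') hle⟩
    have hcard : ((Finset.Iic (⟨k, h⟩ : Fin r)).image (fun k' => mono k')).card = (k:ℕ) + 1 := by
      rw [Finset.card_image_of_injective _ mono.injective, Fin.card_Iic]
    have hle2 := Finset.card_le_card hsub
    rw [hcard] at hle2
    have hcj' : (T.filter (fun i => i ≤ j)).card ≤ (k : ℕ) := hcj
    omega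
  -- colRank identity
  have colRank_eq : ∀ j : Fin n, colRank n A ((j:ℕ) + 1) = c j := by
    intro j
    have step1 : colRank n A ((j:ℕ) + 1)
        = Module.finrank ℂ (Submodule.span ℂ (v '' Set.Iic j)) := by
      rw [hv]
      unfold colRank
      have h1 : {l : Fin n | (l:ℕ) < (j:ℕ) + 1} = Set.Iic j := by
        ext l
        rw [Set.mem_setOf_eq, Set.mem_Iic, Nat.lt_succ_iff, Fin.le_def]
      rw [h1]
      have h2 : (fun j : Fin n => WithLp.toLp 2 fun l => A l j)
          = ((WithLp.linearEquiv 2 ℂ (Fin n → ℂ)).symm : (Fin n → ℂ) →ₗ[ℂ] _) ∘ (fun l => Aᵀ l) := rfl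
      rw [h2, Set.image_comp, Submodule.span_image, LinearEquiv.finrank_map_eq]
    rw [step1]
    have hspan : Submodule.span ℂ (v '' Set.Iic j)
        = Submodule.span ℂ (gN '' (T.filter (fun i => i ≤ j) : Finset (Fin n))) := by
      rw [← span_gramSchmidt_Iic ℂ v j, ← hg, hg, ← span_gramSchmidtNormed v (Set.Iic j), ← hgN]
      apply le_antisymm
      · rw [Submodule.span_le]
        rintro x ⟨i, hi, rfl⟩
        by_cases h0 : gN i = 0
        · rw [h0]; exact Submodule.zero_mem _
        · apply Submodule.subset_span
          refine ⟨i, ?_, rfl⟩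
          simp only [Finset.coe_filter, Set.mem_setOf_eq, hT, Finset.mem_filter,
            Finset.mem_univ, true_and]
          exact ⟨h0, Set.mem_Iic.1 hi⟩

      · apply Submodule.span_mono
        apply Set.image_mono
        intro i hi
        simp only [Finset.coe_filter, Set.mem_setOf_eq, Finset.mem_filter] at hi
        exact Set.mem_Iic.2 hi.2
    rw [hspan]
    set s' : Set (Fin n) := ((T.filter (fun i => i ≤ j) : Finset (Fin n)) : Set (Fin n)) with hs'
    have hmem' : ∀ i : s', gN (i : Fin n) ≠ 0 := by
      rintro ⟨i, hi⟩
      rw [hs'] at hi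
      simp only [Finset.coe_filter, Set.mem_setOf_eq, hT, Finset.mem_filter,
        Finset.mem_univ, true_and] at hi
      exact hi.1
    have ho : Orthonormal ℂ (fun i : s' => gN (i : Fin n)) := by
      have h0 := gramSchmidtNormed_orthonormal' (𝕜 := ℂ) v
      have hcomp := h0.comp (fun i : s' =>
        (⟨(i : Fin n), hmem' i⟩ : {i : Fin n | gramSchmidtNormed ℂ v i ≠ 0}))
        (fun a c hac => Subtype.ext (by simpa using congrArg Subtype.val hac))
      exact hcomp
    have hfr := finrank_span_eq_card ho.linearIndependent
    rw [← Set.image_eq_range] at hfr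
    rw [hfr]
    have hcard2 : Fintype.card ↑s' = (T.filter (fun i => i ≤ j)).card := by
      exact (Fintype.card_congr (Equiv.refl _)).trans (Fintype.card_coe _)
    rw [hcard2]
  -- define Q and R
  refine ⟨Matrix.of (fun l k => b k l), Matrix.of (fun k j => (inner ℂ (b k) (v j) : ℂ)),
    ?_, ?_, ?_, ?_, ?_⟩
  · -- unitary
    ext k k'
    rw [Matrix.mul_apply, Matrix.one_apply]
    have hON := b.orthonormal
    rw [orthonormal_iff_ite] at hON
    have := hON k k'
    rw [PiLp.inner_apply] at this
    simp only [RCLike.inner_apply] at this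
    rw [← this]
    apply Finset.sum_congr rfl
    intro l _
    simp only [Matrix.conjTranspose_apply, Matrix.of_apply, RCLike.star_def]
    exact mul_comm _ _
  · -- triangular
    intro i j hji
    simp only [Matrix.of_apply]
    by_cases hir : r ≤ (i : ℕ)
    · exact zero1 i hir j
    · push_neg at hir
      apply zero2 i hir
      apply claim
      have h1 : (T.filter (fun i => i ≤ j)) ⊆ Finset.Iic j := by
        intro x hx
        rw [Finset.mem_filter] at hx
        exact Finset.mem_Iic.2 hx.2
      have h2 := Finset.card_le_card h1
      rw [Fin.card_Iic] at h2
      have h3 : (j : ℕ) < (i : ℕ) := hji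
      show (Finset.filter (fun i' => i' ≤ j) T).card ≤ (i : ℕ)
      omega
  · -- A = Q R
    ext l j
    rw [Matrix.mul_apply]
    simp only [Matrix.of_apply]
    have hsum := b.sum_repr (v j)
    have happ := congrArg (fun x : EuclideanSpace ℂ (Fin n) => x l) hsum
    simp only [OrthonormalBasis.repr_apply_apply] at happ
    have hL : (∑ k, (inner ℂ (b k) (v j) : ℂ) • b k) l
        = ∑ k, (inner ℂ (b k) (v j) : ℂ) * b k l := by
      rw [WithLp.ofLp_sum, Finset.sum_apply]
      apply Finset.sum_congr rfl
      intro k _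
      rfl
    rw [hL] at happ
    have : A l j = v j l := rfl
    rw [this, ← happ]
    apply Finset.sum_congr rfl
    intro k _
    ring
  · -- rank condition
    intro i j hij
    rw [colRank_eq] at hij
    simp only [Matrix.of_apply]
    by_cases hir : r ≤ (i : ℕ)
    · exact zero1 i hir j
    · push_neg at hir
      exact zero2 i hir j (claim j i hir hij)
  · -- positivity condition
    intro i j hprev hne
    simp only [Matrix.of_apply] at hprev hne ⊢
    have hir : (i : ℕ) < r := by
      by_contra h
      push_neg at h
      exact hne (zero1 i h j)
    set m := mono ⟨i, hir⟩ with hm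
    have hjm : ¬ j < m := fun hlt => hne (zero2 i hir j hlt)
    push_neg at hjm
    have hjm2 : ¬ m < j := by
      intro hlt
      have h1 := hprev m hlt
      rw [diag i hir] at h1
      rw [Complex.ofReal_eq_zero, norm_eq_zero] at h1
      exact gm_ne i hir h1
    have hjEq : j = m := le_antisymm (not_lt.1 hjm2) hjm
    rw [hjEq, diag i hir]
    refine ⟨Complex.ofReal_im _, ?_⟩
    rw [Complex.ofReal_re]
    exact norm_pos_iff.2 (gm_ne i hir)
end

section
/- Define F(A) to be the canonical upper-triangular factor R of the canonical QR decomposition of A (satisfying: R_{ij}=0 for i greater than the rank of the first j columns of A, and the first nonzero entry of each row of R is real positive). Then F is a canonical form for the left-multiplication action of the unitary group U(n) on ℂ^{n×n}: (i) F(A) = UA for some unitary U, and (ii) F(A) = F(B) if and only if A = VB for some unitary V. -/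
open Matrix

/-- `R` is the canonical upper-triangular factor of `A`: `A = QR` with `Q`
unitary, entries of `R` below row `ρ_j` (the rank of the first `j` columns of
`A`) in column `j` vanish, and the first nonzero entry of each row of `R` is
real and positive. -/
def IsCanonicalFactor (n : ℕ) (A R : Matrix (Fin n) (Fin n) ℂ) : Prop :=
  (∃ Q : Matrix (Fin n) (Fin n) ℂ, Qᴴ * Q = 1 ∧ A = Q * R) ∧
  (∀ i j : Fin n, colRank n A ((j : ℕ) + 1) ≤ (i : ℕ) → R i j = 0) ∧
  (∀ i j : Fin n, (∀ j' : Fin n, j' < j → R i j' = 0) → R i j ≠ 0 →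
    (R i j).im = 0 ∧ 0 < (R i j).re)

section Aux

lemma colRank_mul {n : ℕ} (Q A : Matrix (Fin n) (Fin n) ℂ) (hQ : Qᴴ * Q = 1) (j : ℕ) :
    colRank n (Q * A) j = colRank n A j := by
  have hQ' : Q * Qᴴ = 1 := mul_eq_one_comm.mp hQ
  let e : (Fin n → ℂ) ≃ₗ[ℂ] (Fin n → ℂ) :=
    LinearEquiv.ofLinear (Matrix.mulVecLin Q) (Matrix.mulVecLin Qᴴ)
      (by rw [← Matrix.mulVecLin_mul, hQ', Matrix.mulVecLin_one])
      (by rw [← Matrix.mulVecLin_mul, hQ, Matrix.mulVecLin_one])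
  have him : (fun l => (Q * A)ᵀ l) '' {l : Fin n | (l : ℕ) < j}
      = e '' ((fun l => Aᵀ l) '' {l : Fin n | (l : ℕ) < j}) := by
    rw [Set.image_image]
    apply Set.image_congr'
    intro l
    funext i
    show (Q * A)ᵀ l i = Q.mulVec (Aᵀ l) i
    simp [Matrix.transpose_apply, Matrix.mul_apply, Matrix.mulVec, dotProduct]
  unfold colRank
  rw [him, ← LinearEquiv.coe_coe, ← Submodule.map_span]
  exact LinearEquiv.finrank_map_eq e _

lemma colRank_zero {n : ℕ} (A : Matrix (Fin n) (Fin n) ℂ) : colRank n A 0 = 0 := by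
  unfold colRank
  have : {l : Fin n | (l : ℕ) < 0} = ∅ := by ext l; simp
  rw [this]
  simp

lemma colRank_mono' {n : ℕ} (A : Matrix (Fin n) (Fin n) ℂ) {j j' : ℕ} (h : j ≤ j') :
    colRank n A j ≤ colRank n A j' := by
  apply Submodule.finrank_mono
  apply Submodule.span_mono
  apply Set.image_mono
  intro l hl
  exact lt_of_lt_of_le hl h

lemma colRank_succ_le {n : ℕ} (A : Matrix (Fin n) (Fin n) ℂ) (j : ℕ) :
    colRank n A (j + 1) ≤ colRank n A j + 1 := by
  by_cases hj : j < n
  · have hset : {l : Fin n | (l : ℕ) < j + 1} = insert ⟨j, hj⟩ {l : Fin n | (l : ℕ) < j} := by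
      ext l
      simp [Fin.ext_iff]
      omega
    unfold colRank
    rw [hset, Set.image_insert_eq, Submodule.span_insert]
    have h1 := Submodule.finrank_add_le_finrank_add_finrank
      (Submodule.span ℂ ({Aᵀ ⟨j, hj⟩} : Set (Fin n → ℂ)))
      (Submodule.span ℂ ((fun l => Aᵀ l) '' {l : Fin n | (l : ℕ) < j}))
    have h2 : Module.finrank ℂ (Submodule.span ℂ ({Aᵀ ⟨j, hj⟩} : Set (Fin n → ℂ))) ≤ 1 := by
      simpa using finrank_span_le_card ({Aᵀ ⟨j, hj⟩} : Set (Fin n → ℂ))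
    omega
  · have hset : {l : Fin n | (l : ℕ) < j + 1} = {l : Fin n | (l : ℕ) < j} := by
      ext l
      have := l.isLt
      simp
      omega
    unfold colRank
    rw [hset]
    omega

/-- submodule of vectors supported in coordinates `< k` -/
noncomputable def lowSupp (n k : ℕ) : Submodule ℂ (Fin n → ℂ) where
  carrier := {v | ∀ i : Fin n, k ≤ (i : ℕ) → v i = 0}
  zero_mem' := by intro i _; rfl
  add_mem' := by intro a b ha hb i hi; simp [ha i hi, hb i hi]
  smul_mem' := by intro c a ha i hi; simp [ha i hi]

lemma lowSupp_finrank_le (n k : ℕ) (hk : k ≤ n) : Module.finrank ℂ (lowSupp n k) ≤ k := by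
  let φ : lowSupp n k →ₗ[ℂ] (Fin k → ℂ) :=
    { toFun := fun v => fun i => (v : Fin n → ℂ) (Fin.castLE hk i)
      map_add' := by intro a b; rfl
      map_smul' := by intro c a; rfl }
  have hinj : Function.Injective φ := by
    intro a b hab
    ext i
    by_cases hi : (i : ℕ) < k
    · have := congrFun hab ⟨(i : ℕ), hi⟩
      simpa [φ, Fin.castLE, Fin.ext_iff] using this
    · rw [a.2 i (by omega), b.2 i (by omega)]
  calc Module.finrank ℂ (lowSupp n k) ≤ Module.finrank ℂ (Fin k → ℂ) :=
        LinearMap.finrank_le_finrank_of_injective hinj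
    _ = k := by simp

lemma pivot_ne_zero {n : ℕ} (R : Matrix (Fin n) (Fin n) ℂ)
    (hz : ∀ i j : Fin n, colRank n R ((j : ℕ) + 1) ≤ (i : ℕ) → R i j = 0)
    (c k : Fin n) (hk : colRank n R (c : ℕ) = (k : ℕ))
    (hk1 : colRank n R ((c : ℕ) + 1) = (k : ℕ) + 1) : R k c ≠ 0 := by
  intro h0
  have hle : Submodule.span ℂ ((fun l => Rᵀ l) '' {l : Fin n | (l : ℕ) < (c : ℕ) + 1})
      ≤ lowSupp n (k : ℕ) := by
    rw [Submodule.span_le]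
    rintro v ⟨l, hl, rfl⟩
    simp only [Set.mem_setOf_eq] at hl
    intro i hi
    show R i l = 0
    rcases lt_or_eq_of_le (Nat.lt_succ_iff.mp hl) with hlc | hlc
    · exact hz i l (le_trans (le_trans (colRank_mono' R hlc) (le_of_eq hk)) hi)
    · have hlc' : l = c := Fin.ext hlc
      subst hlc'
      rcases lt_or_eq_of_le hi with hi' | hi'
      · exact hz i l (by omega)
      · have : i = k := Fin.ext hi'.symm
        rw [this]; exact h0
  have h1 : colRank n R ((c : ℕ) + 1) ≤ Module.finrank ℂ (lowSupp n (k : ℕ)) :=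
    Submodule.finrank_mono hle
  have h2 := lowSupp_finrank_le n (k : ℕ) k.isLt.le
  omega

lemma canonical_unique {n : ℕ} (R R' W : Matrix (Fin n) (Fin n) ℂ)
    (hW : Wᴴ * W = 1) (hRW : R' = W * R)
    (hz : ∀ i j : Fin n, colRank n R ((j:ℕ)+1) ≤ (i:ℕ) → R i j = 0)
    (hpos : ∀ i j : Fin n, (∀ j' : Fin n, j' < j → R i j' = 0) → R i j ≠ 0 →
      (R i j).im = 0 ∧ 0 < (R i j).re)
    (hz' : ∀ i j : Fin n, colRank n R ((j:ℕ)+1) ≤ (i:ℕ) → R' i j = 0)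
    (hpos' : ∀ i j : Fin n, (∀ j' : Fin n, j' < j → R' i j' = 0) → R' i j ≠ 0 →
      (R' i j).im = 0 ∧ 0 < (R' i j).re) : R' = R := by
  have hOrtho : ∀ a b : Fin n, (∑ i : Fin n, (starRingEnd ℂ) (W i a) * W i b)
      = if a = b then 1 else 0 := by
    intro a b
    have := congrFun (congrFun hW a) b
    simpa [Matrix.mul_apply, Matrix.conjTranspose_apply, Matrix.one_apply] using this
  have claim : ∀ m : ℕ, ∀ k : Fin n, (k : ℕ) = m → (k : ℕ) < colRank n R n →
      ∀ i : Fin n, W i k = if i = k then 1 else 0 := by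
    intro m
    induction m using Nat.strong_induction_on with
    | _ m IH =>
      intro k hkm hkρ
      subst hkm
      have hex : ∃ j, (k : ℕ) < colRank n R j := ⟨n, hkρ⟩
      have hc0n : Nat.find hex ≤ n := Nat.find_le hkρ
      have hc0pos : 0 < Nat.find hex := by
        rcases Nat.eq_zero_or_pos (Nat.find hex) with h | h
        · exfalso
          have h2 := Nat.find_spec hex
          rw [h, colRank_zero] at h2
          omega
        · exact h
      have hcmin : ¬ (k : ℕ) < colRank n R (Nat.find hex - 1) :=
        Nat.find_min hex (by omega)
      have hstep := colRank_succ_le R (Nat.find hex - 1)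
      have hspec : (k:ℕ) < colRank n R (Nat.find hex) := Nat.find_spec hex
      rw [show Nat.find hex - 1 + 1 = Nat.find hex by omega] at hstep
      have hρc : colRank n R (Nat.find hex - 1) = (k : ℕ) := by omega
      have hρc1 : colRank n R (Nat.find hex) = (k : ℕ) + 1 := by omega
      have hcn : Nat.find hex - 1 < n := by omega
      set c : Fin n := ⟨Nat.find hex - 1, hcn⟩ with hcdef
      have hρcc : colRank n R (c : ℕ) = (k : ℕ) := hρc
      have hρc1' : colRank n R ((c:ℕ) + 1) = (k:ℕ) + 1 := by
        show colRank n R (Nat.find hex - 1 + 1) = _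
        rw [show Nat.find hex - 1 + 1 = Nat.find hex by omega]
        exact hρc1
      have hpiv : R k c ≠ 0 := pivot_ne_zero R hz c k hρcc hρc1'
      have hIH : ∀ t : Fin n, (t:ℕ) < (k:ℕ) → ∀ i : Fin n, W i t = if i = t then 1 else 0 :=
        fun t ht i => IH (t:ℕ) ht t rfl (by omega) i
      have hsum : ∀ i : Fin n, (k:ℕ) ≤ (i:ℕ) → R' i c = W i k * R k c := by
        intro i hi
        rw [hRW]
        show (∑ t : Fin n, W i t * R t c) = _
        apply Finset.sum_eq_single k
        · intro t _ htk
          rcases lt_trichotomy (t:ℕ) (k:ℕ) with h | h | h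
          · have hit : i ≠ t := by intro hh; subst hh; omega
            rw [hIH t h i, if_neg hit, zero_mul]
          · exact absurd (Fin.ext h) htk
          · rw [hz t c (by omega), mul_zero]
        · intro h; exact absurd (Finset.mem_univ k) h
      have hWik0 : ∀ i : Fin n, i ≠ k → W i k = 0 := by
        intro i hik
        rcases lt_trichotomy (i:ℕ) (k:ℕ)  with h | h | h
        · have horth := hOrtho i k
          rw [if_neg hik] at horth
          have : (∑ t : Fin n, (starRingEnd ℂ) (W t i) * W t k) = W i k := by
            rw [Finset.sum_eq_single i]
            · rw [hIH i h i, if_pos rfl, _root_.map_one, one_mul]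
            · intro t _ hti
              rw [hIH i h t, if_neg hti, map_zero, zero_mul]
            · intro h'; exact absurd (Finset.mem_univ i) h'
          rw [this] at horth
          exact horth
        · exact absurd (Fin.ext h) hik
        · have h0 : R' i c = 0 := hz' i c (by omega)
          rw [hsum i (by omega)] at h0
          exact (mul_eq_zero.mp h0).resolve_right hpiv
      have hWkk : (starRingEnd ℂ) (W k k) * W k k = 1 := by
        have horth := hOrtho k k
        rw [if_pos rfl] at horth
        rw [Finset.sum_eq_single k] at horth
        · exact horth
        · intro t _ htk
          rw [hWik0 t htk, map_zero, zero_mul]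
        · intro h'; exact absurd (Finset.mem_univ k) h'
      have hfirstR : ∀ j' : Fin n, j' < c → R k j' = 0 := by
        intro j' hj'
        exact hz k j' (by
          have : (j':ℕ) + 1 ≤ (c:ℕ) := hj'
          calc colRank n R ((j':ℕ)+1) ≤ colRank n R (c:ℕ) := colRank_mono' R this
            _ = (k:ℕ) := hρcc)
      have ha := hpos k c hfirstR hpiv
      have hb' : R' k c = W k k * R k c := hsum k le_rfl
      have hWkkne : W k k ≠ 0 := by
        intro h0
        rw [h0, map_zero, zero_mul] at hWkk
        exact zero_ne_one hWkk
      have hne' : R' k c ≠ 0 := by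
        rw [hb']
        exact mul_ne_zero hWkkne hpiv
      have hfirstR' : ∀ j' : Fin n, j' < c → R' k j' = 0 := by
        intro j' hj'
        exact hz' k j' (by
          have : (j':ℕ) + 1 ≤ (c:ℕ) := hj'
          calc colRank n R ((j':ℕ)+1) ≤ colRank n R (c:ℕ) := colRank_mono' R this
            _ = (k:ℕ) := hρcc)
      have hb := hpos' k c hfirstR' hne'
      have hwim : (W k k).im = 0 := by
        have h1 : (R' k c).im = (W k k).im * (R k c).re := by
          rw [hb', Complex.mul_im, ha.1, mul_zero, zero_add]
        rw [hb.1] at h1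
        have h2 : (W k k).im * (R k c).re = 0 := h1.symm
        rcases mul_eq_zero.mp h2 with h | h
        · exact h
        · exact absurd h (ne_of_gt ha.2)
      have hwre : 0 < (W k k).re := by
        have h1 : (R' k c).re = (W k k).re * (R k c).re := by
          rw [hb', Complex.mul_re, ha.1, mul_zero, sub_zero]
        nlinarith [hb.2, ha.2]
      have hwre1 : (W k k).re * (W k k).re + (W k k).im * (W k k).im = 1 := by
        have := congrArg Complex.re hWkk
        simpa [Complex.mul_re, Complex.conj_re, Complex.conj_im] using this
      have hW1 : W k k = 1 := by
        apply Complex.ext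
        · simp only [Complex.one_re]
          nlinarith
        · simp [hwim]
      intro i
      by_cases hik : i = k
      · subst hik; rw [if_pos rfl, hW1]
      · rw [if_neg hik]; exact hWik0 i hik
  ext i j
  rw [hRW]
  show (∑ t : Fin n, W i t * R t j) = R i j
  have hterm : ∀ t : Fin n, W i t * R t j = if i = t then R t j else 0 := by
    intro t
    by_cases hR : R t j = 0
    · simp [hR]
    · have htρ : (t:ℕ) < colRank n R ((j:ℕ)+1) := by
        by_contra h
        exact hR (hz t j (le_of_not_gt h))
      have htn : (t:ℕ) < colRank n R n :=
        lt_of_lt_of_le htρ (colRank_mono' R (by omega))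
      rw [claim (t:ℕ) t rfl htn i]
      by_cases hit : i = t <;> simp [hit]
  rw [Finset.sum_congr rfl (fun t _ => hterm t)]
  simp

lemma unitary_mul {n : ℕ} (U V : Matrix (Fin n) (Fin n) ℂ)
    (hU : Uᴴ * U = 1) (hV : Vᴴ * V = 1) : (U * V)ᴴ * (U * V) = 1 := by
  rw [Matrix.conjTranspose_mul, Matrix.mul_assoc, ← Matrix.mul_assoc Uᴴ U V, hU,
    Matrix.one_mul, hV]

end Aux

/-- the map `F` assigning to each matrix its canonical
upper-triangular QR factor is a canonical form for the left-multiplication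
action of the unitary group on `ℂ^{n×n}`. -/
theorem canonical_factor_is_canonical_form
    (n : ℕ) (F : Matrix (Fin n) (Fin n) ℂ → Matrix (Fin n) (Fin n) ℂ)
    (hF : ∀ A, IsCanonicalFactor n A (F A)) :
    (∀ A : Matrix (Fin n) (Fin n) ℂ,
      ∃ U : Matrix (Fin n) (Fin n) ℂ, Uᴴ * U = 1 ∧ F A = U * A) ∧
    (∀ A B : Matrix (Fin n) (Fin n) ℂ,
      F A = F B ↔ ∃ V : Matrix (Fin n) (Fin n) ℂ, Vᴴ * V = 1 ∧ A = V * B) := by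
  have hFeq : ∀ A : Matrix (Fin n) (Fin n) ℂ, ∀ Q : Matrix (Fin n) (Fin n) ℂ,
      Qᴴ * Q = 1 → A = Q * F A → F A = Qᴴ * A := by
    intro A Q hQ hA
    conv_rhs => rw [hA]
    rw [← Matrix.mul_assoc, hQ, Matrix.one_mul]
  constructor
  · intro A
    obtain ⟨⟨Q, hQ, hA⟩, _, _⟩ := hF A
    refine ⟨Qᴴ, ?_, hFeq A Q hQ hA⟩
    rw [Matrix.conjTranspose_conjTranspose]
    exact mul_eq_one_comm.mp hQ
  · intro A B
    obtain ⟨⟨QA, hQA, hAQ⟩, hzA, hpA⟩ := hF A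
    obtain ⟨⟨QB, hQB, hBQ⟩, hzB, hpB⟩ := hF B
    constructor
    · intro h
      refine ⟨QA * QBᴴ, ?_, ?_⟩
      · exact unitary_mul QA QBᴴ hQA
          (by rw [Matrix.conjTranspose_conjTranspose]; exact mul_eq_one_comm.mp hQB)
      · rw [hAQ, h, hFeq B QB hQB hBQ]
        rw [Matrix.mul_assoc]
    · rintro ⟨V, hV, hAB⟩
      -- colRank relations
      have hcolA : ∀ j, colRank n A j = colRank n B j := by
        intro j
        rw [hAB]
        exact colRank_mul V B hV j
      have hcolB : ∀ j, colRank n B j = colRank n (F B) j := by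
        intro j
        conv_lhs => rw [hBQ]
        exact colRank_mul QB (F B) hQB j
      -- F A = W * F B with W unitary
      set W : Matrix (Fin n) (Fin n) ℂ := QAᴴ * V * QB with hWdef
      have hWu : Wᴴ * W = 1 := by
        apply unitary_mul
        · apply unitary_mul
          · rw [Matrix.conjTranspose_conjTranspose]
            exact mul_eq_one_comm.mp hQA
          · exact hV
        · exact hQB
      have hFAW : F A = W * F B := by
        rw [hFeq A QA hQA hAQ, hAB, hWdef, Matrix.mul_assoc, Matrix.mul_assoc, ← hBQ]
      apply canonical_unique (F B) (F A) W hWu hFAW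
      · intro i j hij
        exact hzB i j (by rw [hcolB]; exact hij)
      · exact hpB
      · intro i j hij
        exact hzA i j (by rw [hcolA, hcolB]; exact hij)
      · exact hpA
end
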